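/- For every ε > 0 and every finite collection Ω of measurable subsets of C, there exists h ∈ H_C such that |μ_C(hA ∩ B) − μ_C(A)·μ_C(B)| < ε for all A, B ∈ Ω; that is, the action of H_C on (C, μ_C) is weakly mixing. -/

import Mathlib

open MeasureTheory ProbabilityTheory Filter

namespace Finitary

/-- The free group `F_ℓ` on `ℓ` generators. -/
abbrev FG (ℓ : ℕ) := FreeGroup (Fin ℓ)

instance {ℓ : ℕ} : Countable (FG ℓ) := FreeGroup.toWord_injective.countable

/-- The word length on the free group. -/
noncomputable def wl {ℓ : ℕ} (g : FG ℓ) : ℕ := FreeGroup.norm g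

/-- The ball `B(r)` of radius `r` centered at the identity. -/
def ball (ℓ r : ℕ) : Set (FG ℓ) := {g | wl g ≤ r}

/-- `W_a`: the set of reduced words ending in the generator `a`, together with the identity. -/
def Wa {ℓ : ℕ} (a : Fin ℓ) : Set (FG ℓ) :=
  {g | g = 1 ∨ wl g = wl (g * (FreeGroup.of a)⁻¹) + 1}

/-- The configuration space `X_p = {1,…,m}^{F_ℓ}`. -/
abbrev Conf (ℓ m : ℕ) := FG ℓ → Fin m

/-- The shift action `(g·x)_h = x_{g⁻¹h}`. -/
def shift {ℓ m : ℕ} (g : FG ℓ) (x : Conf ℓ m) : Conf ℓ m := fun h => x (g⁻¹ * h)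

/-- `μ` is the Bernoulli product measure on `X_p` with marginal weights `P`:
every cylinder set has measure equal to the product of the weights of its fixed symbols. -/
def IsBernoulli {ℓ m : ℕ} (P : Fin m → ℝ) (μ : Measure (Conf ℓ m)) : Prop :=
  IsProbabilityMeasure μ ∧
    ∀ (A : Finset (FG ℓ)) (σ : FG ℓ → Fin m),
      (μ {x | ∀ g ∈ A, x g = σ g}).toReal = ∏ g ∈ A, P (σ g)

/-- The set of radii `r` such that the ball `B(r)` determines `φ(x)_e`. -/
def codeSet {ℓ m n : ℕ} (φ : Conf ℓ m → Conf ℓ n) (x : Conf ℓ m) : Set ℕ :=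
  {r | ∀ x' : Conf ℓ m, (∀ g ∈ ball ℓ r, x' g = x g) → φ x' 1 = φ x 1}

/-- `r_φ(x)`: the least radius of a ball determining `φ(x)_e`. -/
noncomputable def rphi {ℓ m n : ℕ} (φ : Conf ℓ m → Conf ℓ n) (x : Conf ℓ m) : ℕ :=
  sInf (codeSet φ x)

/-- `v_φ(x) = |B(r_φ(x))|`. -/
noncomputable def vphi {ℓ m n : ℕ} (φ : Conf ℓ m → Conf ℓ n) (x : Conf ℓ m) : ℕ :=
  (ball ℓ (rphi φ x)).ncard

/-- A finitary coding: a measurable, equivariant, measure-preserving map which is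
a.e. finitarily determined at the identity coordinate (i.e. continuous off a null set). -/
structure IsFinitaryCoding {ℓ m n : ℕ} (μp : Measure (Conf ℓ m)) (μq : Measure (Conf ℓ n))
    (φ : Conf ℓ m → Conf ℓ n) : Prop where
  measurable : Measurable φ
  measurePreserving : MeasurePreserving φ μp μq
  equivariant : ∀ g : FG ℓ, ∀ᵐ x ∂μp, φ (shift g x) = shift g (φ x)
  finitary : ∀ᵐ x ∂μp, (codeSet φ x).Nonempty

/-- A finitary isomorphism: a pair of mutually inverse (mod null sets) finitary codings. -/
structure IsFinitaryIso {ℓ m n : ℕ} (μp : Measure (Conf ℓ m)) (μq : Measure (Conf ℓ n))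
    (φ : Conf ℓ m → Conf ℓ n) (ψ : Conf ℓ n → Conf ℓ m) : Prop where
  toCoding : IsFinitaryCoding μp μq φ
  invCoding : IsFinitaryCoding μq μp ψ
  leftInv : ∀ᵐ x ∂μp, ψ (φ x) = x
  rightInv : ∀ᵐ y ∂μq, φ (ψ y) = y

/-- Finite expectation of code volume: `∫ v_φ dμ_p < ∞` and `∫ v_{φ⁻¹} dμ_q < ∞`. -/
def FiniteExpectation {ℓ m n : ℕ} (μp : Measure (Conf ℓ m)) (μq : Measure (Conf ℓ n))
    (φ : Conf ℓ m → Conf ℓ n) (ψ : Conf ℓ n → Conf ℓ m) : Prop :=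
  (∫⁻ x, (vphi φ x : ENNReal) ∂μp) < ⊤ ∧ (∫⁻ y, (vphi ψ y : ENNReal) ∂μq) < ⊤

/-- The sub-σ-algebra generated by the coordinate maps `x ↦ x_g`, `g ∈ S`. -/
def coordAlg {ℓ m : ℕ} (S : Set (FG ℓ)) : MeasurableSpace (Conf ℓ m) :=
  MeasurableSpace.comap (fun x => S.restrict x) inferInstance

/-- The past algebra `𝒜_{p,a}`, generated by the coordinates in `W_a`. -/
def pastAlg {ℓ m : ℕ} (a : Fin ℓ) : MeasurableSpace (Conf ℓ m) := coordAlg (Wa a)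

/-- The atom of `x` for the σ-algebra generated by the coordinates in `S`. -/
def atomOn {ℓ m : ℕ} (S : Set (FG ℓ)) (x : Conf ℓ m) : Set (Conf ℓ m) :=
  {y | ∀ g ∈ S, y g = x g}

/-- The regular conditional probability `μ^𝒞(s | x)` given the sub-σ-algebra `𝒞`. -/
noncomputable def condProb {ℓ m : ℕ} (μ : Measure (Conf ℓ m)) [IsFiniteMeasure μ]
    (𝒞 : MeasurableSpace (Conf ℓ m)) (s : Set (Conf ℓ m)) (x : Conf ℓ m) : ENNReal :=
  @condExpKernel (Conf ℓ m) MeasurableSpace.pi inferInstance μ inferInstance 𝒞 x s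

/-- Conditional information `I_μ(ℬ|𝒞)(x) = −log μ^𝒞([x]_ℬ | x)`, where the atom `[x]_ℬ`
of the sub-σ-algebra `ℬ` is supplied explicitly. -/
noncomputable def condInfo {ℓ m : ℕ} (μ : Measure (Conf ℓ m)) [IsFiniteMeasure μ]
    (𝒞 : MeasurableSpace (Conf ℓ m)) (atomB : Set (Conf ℓ m)) (x : Conf ℓ m) : ℝ :=
  - Real.log ((condProb μ 𝒞 atomB x).toReal)

/-- The information cocycle `J(𝒜_{p,a}, V) = I(𝒜_{p,a}|V⁻¹𝒜_{p,a}) − I(V⁻¹𝒜_{p,a}|𝒜_{p,a})`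
for a measure-preserving `V` (the Radon–Nikodym term of the general definition vanishes). -/
noncomputable def Jcoc {ℓ m : ℕ} (a : Fin ℓ) (μ : Measure (Conf ℓ m)) [IsFiniteMeasure μ]
    (V : Conf ℓ m → Conf ℓ m) (x : Conf ℓ m) : ℝ :=
  condInfo μ (MeasurableSpace.comap V (pastAlg a)) (atomOn (Wa a) x) x
    - condInfo μ (pastAlg a) (V ⁻¹' atomOn (Wa a) (V x)) x

/-- The shift by `g` as a bijection of the configuration space. -/
def shiftEquiv {ℓ m : ℕ} (g : FG ℓ) : Equiv.Perm (Conf ℓ m) where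
  toFun := shift g
  invFun := shift g⁻¹
  left_inv x := by funext h; simp [shift, mul_assoc]
  right_inv x := by funext h; simp [shift, mul_assoc]

/-- A locally finite measure-preserving measurable bijection of `(X_p, μ)`. -/
def IsLocallyFiniteMP {ℓ m : ℕ} (μ : Measure (Conf ℓ m)) (V : Equiv.Perm (Conf ℓ m)) : Prop :=
  Measurable ⇑V ∧ Measurable ⇑V.symm ∧ MeasurePreserving ⇑V μ μ ∧
    ∀ᵐ x ∂μ, {g : FG ℓ | V x g ≠ x g}.Finite

/-- The group `G_p` generated by the shifts together with the locally finite
measure-preserving bijections. -/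
def Gp {ℓ m : ℕ} (μ : Measure (Conf ℓ m)) : Subgroup (Equiv.Perm (Conf ℓ m)) :=
  Subgroup.closure ({V | ∃ g : FG ℓ, V = shiftEquiv g} ∪ {V | IsLocallyFiniteMP μ V})

/-- The cylinder set where the coordinates on `S` are fixed to the values of `η`. -/
def cylOn {ℓ m : ℕ} (S : Set (FG ℓ)) (η : FG ℓ → Fin m) : Set (Conf ℓ m) :=
  {x | ∀ g ∈ S, x g = η g}

/-- `H_C^+`: locally finite m.p. bijections fixing all coordinates in `B(N) ∪ (F_ℓ ∖ W_a)`. -/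
def HCplus {ℓ m : ℕ} (μ : Measure (Conf ℓ m)) (a : Fin ℓ) (N : ℕ) :
    Set (Equiv.Perm (Conf ℓ m)) :=
  {h | IsLocallyFiniteMP μ h ∧ ∀ᵐ x ∂μ, ∀ g ∈ ball ℓ N ∪ (Wa a)ᶜ, h x g = x g}

/-- `H_C^-`: locally finite m.p. bijections fixing all coordinates in `W_a ∪ B(N)`. -/
def HCminus {ℓ m : ℕ} (μ : Measure (Conf ℓ m)) (a : Fin ℓ) (N : ℕ) :
    Set (Equiv.Perm (Conf ℓ m)) :=
  {h | IsLocallyFiniteMP μ h ∧ ∀ᵐ x ∂μ, ∀ g ∈ Wa a ∪ ball ℓ N, h x g = x g}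

/-- The normalized measure `μ_C(A) = μ(A)/μ(C)` (real-valued). -/
noncomputable def relMeas {ℓ m : ℕ} (μ : Measure (Conf ℓ m)) (C A : Set (Conf ℓ m)) : ℝ :=
  (μ A).toReal / (μ C).toReal

/-- The set where `m_φ(x) ≤ M`. -/
def mphiLe {ℓ m n : ℕ} (φ : Conf ℓ m → Conf ℓ n) (a : Fin ℓ) (M : ℕ) : Set (Conf ℓ m) :=
  {x | ∀ g ∈ Wa a, rphi φ (shift g⁻¹ x) ≤ wl g + M}

/-- The set where `a_φ(x) ≤ M`. -/
def aphiLe {ℓ m n : ℕ} (φ : Conf ℓ m → Conf ℓ n) (a : Fin ℓ) (M : ℕ) : Set (Conf ℓ m) :=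
  {x | ∀ g ∉ Wa a, rphi φ (shift g⁻¹ x) ≤ wl g + M}

/-- The set `D = C ∩ {x : m_φ(x) ≤ M, a_φ(x) ≤ M}` for the cylinder `C` over `B(M)`
determined by `η`. -/
def Dset {ℓ m n : ℕ} (φ : Conf ℓ m → Conf ℓ n) (a : Fin ℓ) (M : ℕ) (η : FG ℓ → Fin m) :
    Set (Conf ℓ m) :=
  cylOn (ball ℓ M) η ∩ (mphiLe φ a M ∩ aphiLe φ a M)

/-- The coboundary equation `J(𝒜_{p,a}, V) = J(𝒜_{q,a}, φVφ⁻¹)∘φ + f∘V − f` a.e.,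
for every `V ∈ G_p`. -/
def CocycleEq {ℓ m n : ℕ} (a : Fin ℓ) (μp : Measure (Conf ℓ m)) (μq : Measure (Conf ℓ n))
    [IsFiniteMeasure μp] [IsFiniteMeasure μq] (φ : Conf ℓ m → Conf ℓ n)
    (ψ : Conf ℓ n → Conf ℓ m) (f : Conf ℓ m → ℝ) : Prop :=
  ∀ V ∈ Gp μp, ∀ᵐ x ∂μp,
    Jcoc a μp (⇑V) x = Jcoc a μq (φ ∘ ⇑V ∘ ψ) (φ x) + f (V x) - f x

/-- Tail property: every point obtained from a point of `D ∖ E` by altering coordinates only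
at `a^k` for `−M−n < k < −M` (or only at `a^k` for `M < k < M+n`) lies in `A`. -/
def TailProp {ℓ m : ℕ} (a : Fin ℓ) (M : ℕ) (D E A : Set (Conf ℓ m)) : Prop :=
  ∀ x ∈ D \ E, ∀ n : ℕ, ∀ x' : Conf ℓ m,
    ((∀ g : FG ℓ,
        (¬ ∃ k : ℤ, -(M : ℤ) - (n : ℤ) < k ∧ k < -(M : ℤ) ∧ g = (FreeGroup.of a) ^ k) →
        x' g = x g) ∨
     (∀ g : FG ℓ,
        (¬ ∃ k : ℤ, (M : ℤ) < k ∧ k < (M : ℤ) + (n : ℤ) ∧ g = (FreeGroup.of a) ^ k) →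
        x' g = x g)) →
    x' ∈ A


section Aux
variable {ℓ : ℕ}

lemma wl_eq (g : FG ℓ) : wl g = g.toWord.length := rfl

lemma reduce_concat (L : List (Fin ℓ × Bool)) (s : Fin ℓ × Bool)
    (hL : FreeGroup.reduce L = L) (hlast : ∀ e, L.getLast? = some e → e ≠ (s.1, !s.2)) :
    FreeGroup.reduce (L ++ [s]) = L ++ [s] := by
  have h1 : FreeGroup.invRev (L ++ [s]) = (s.1, !s.2) :: FreeGroup.invRev L := by
    simp [FreeGroup.invRev]
  have key : FreeGroup.reduce ((s.1, !s.2) :: FreeGroup.invRev L)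
      = (s.1, !s.2) :: FreeGroup.invRev L := by
    rcases List.eq_nil_or_concat L with rfl | ⟨M, e, hMe⟩
    · simp [FreeGroup.invRev, FreeGroup.reduce_singleton]
    · rw [List.concat_eq_append] at hMe
      subst hMe
      have he : e ≠ (s.1, !s.2) := hlast e (by simp)
      have hIR : FreeGroup.invRev (M ++ [e]) = (e.1, !e.2) :: FreeGroup.invRev M := by
        simp [FreeGroup.invRev]
      have hred : FreeGroup.reduce (FreeGroup.invRev (M ++ [e])) = FreeGroup.invRev (M ++ [e]) := by
        rw [FreeGroup.reduce_invRev, hL]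
      rw [FreeGroup.reduce.cons, hred, hIR]
      dsimp only
      rw [if_neg]
      rintro ⟨hc1, hc2⟩
      exact he (Prod.ext hc1.symm (by simpa using hc2.symm))
  have h2 : L ++ [s] = FreeGroup.invRev ((s.1, !s.2) :: FreeGroup.invRev L) := by
    rw [← h1, FreeGroup.invRev_invRev]
  calc FreeGroup.reduce (L ++ [s])
      = FreeGroup.reduce (FreeGroup.invRev ((s.1, !s.2) :: FreeGroup.invRev L)) := by rw [← h2]
    _ = FreeGroup.invRev (FreeGroup.reduce ((s.1, !s.2) :: FreeGroup.invRev L)) :=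
        FreeGroup.reduce_invRev
    _ = L ++ [s] := by rw [key, ← h2]

lemma toWord_mul_single (g : FG ℓ) (s : Fin ℓ × Bool)
    (h : ∀ e, g.toWord.getLast? = some e → e ≠ (s.1, !s.2)) :
    (g * FreeGroup.mk [s]).toWord = g.toWord ++ [s] := by
  conv_lhs => rw [← FreeGroup.mk_toWord (x := g)]
  rw [FreeGroup.mul_mk, FreeGroup.toWord_mk]
  exact reduce_concat _ _ (FreeGroup.reduce_toWord g) h

lemma of_eq_mk (a : Fin ℓ) : FreeGroup.of a = FreeGroup.mk [(a, true)] := rfl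

lemma of_inv_eq_mk (a : Fin ℓ) : (FreeGroup.of a)⁻¹ = FreeGroup.mk [(a, false)] := by
  rw [of_eq_mk, FreeGroup.inv_mk]
  congr 1

lemma prefix_reduced {M : List (Fin ℓ × Bool)} {s : Fin ℓ × Bool}
    (h : FreeGroup.reduce (M ++ [s]) = M ++ [s]) : FreeGroup.reduce M = M := by
  have h1 : FreeGroup.Red (M ++ [s]) (FreeGroup.reduce M ++ [s]) :=
    FreeGroup.Red.append_append FreeGroup.reduce.red FreeGroup.Red.refl
  have h2 : FreeGroup.reduce (M ++ [s]) = FreeGroup.reduce M ++ [s] :=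
    FreeGroup.reduce.min (by rw [h]; exact h1)
  exact List.append_cancel_right (h2.symm.trans h)

lemma mem_Wa_iff {a : Fin ℓ} {g : FG ℓ} :
    g ∈ Wa a ↔ g = 1 ∨ g.toWord.getLast? = some (a, true) := by
  constructor
  · rintro (rfl | hcond)
    · exact Or.inl rfl
    · by_cases hg1 : g = 1
      · exact Or.inl hg1
      right
      by_contra hlast
      have h3 : (g * (FreeGroup.of a)⁻¹).toWord = g.toWord ++ [(a, false)] := by
        rw [of_inv_eq_mk]
        refine toWord_mul_single g (a, false) ?_
        intro e he heq
        subst heq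
        apply hlast
        simpa using he
      have : wl (g * (FreeGroup.of a)⁻¹) = wl g + 1 := by
        rw [wl_eq, wl_eq, h3, List.length_append]; rfl
      omega
  · rintro (rfl | hlast)
    · exact Or.inl rfl
    · right
      rcases List.eq_nil_or_concat g.toWord with hnil | ⟨M, e, hMe⟩
      · simp [hnil] at hlast
      rw [List.concat_eq_append] at hMe
      rw [hMe, List.getLast?_concat] at hlast
      have he : e = (a, true) := by simpa using hlast
      subst he
      have hMred : FreeGroup.reduce M = M := by
        apply prefix_reduced (s := (a, true))
        rw [← hMe]; exact FreeGroup.reduce_toWord g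
      have hg : g = FreeGroup.mk (M ++ [(a, true)]) := by
        conv_lhs => rw [← FreeGroup.mk_toWord (x := g), hMe]
      have hprod : g * (FreeGroup.of a)⁻¹ = FreeGroup.mk M := by
        rw [hg, of_inv_eq_mk, FreeGroup.mul_mk]
        apply FreeGroup.reduce.exact
        apply FreeGroup.reduce.eq_of_red
        have hstep : FreeGroup.Red ([(a, true), (a, false)] : List (Fin ℓ × Bool)) List.nil := by
          have := @FreeGroup.Red.Step.not (Fin ℓ) List.nil List.nil a true
          exact this.to_red
        simpa using FreeGroup.Red.append_append (FreeGroup.Red.refl (L := M)) hstep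
      have hwl : wl (g * (FreeGroup.of a)⁻¹) = M.length := by
        rw [hprod, wl_eq, FreeGroup.toWord_mk, hMred]
      rw [hwl, wl_eq, hMe, List.length_append]
      rfl

lemma toWord_mul_mk_pow (g : FG ℓ) (a : Fin ℓ) (c : Bool)
    (hg : ∀ e, g.toWord.getLast? = some e → e ≠ (a, !c)) (T : ℕ) :
    (g * (FreeGroup.mk [(a, c)]) ^ T).toWord = g.toWord ++ List.replicate T (a, c) := by
  induction T with
  | zero => simp
  | succ T ih =>
    have hcond : ∀ e, (g * (FreeGroup.mk [(a, c)]) ^ T).toWord.getLast? = some e → e ≠ (a, !c) := by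
      intro e he
      rw [ih] at he
      cases T with
      | zero => exact hg e (by simpa using he)
      | succ T =>
        rw [List.replicate_succ', ← List.append_assoc, List.getLast?_concat] at he
        intro hc
        rw [hc] at he
        simp at he
    rw [pow_succ, ← mul_assoc, toWord_mul_single _ (a, c) hcond, ih,
      List.replicate_succ', ← List.append_assoc]



variable {a : Fin ℓ}

lemma getLast?_append_replicate_succ (L : List (Fin ℓ × Bool)) (s : Fin ℓ × Bool) (T : ℕ) :
    (L ++ List.replicate (T + 1) s).getLast? = some s := by
  rw [List.replicate_succ', ← List.append_assoc, List.getLast?_concat]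

lemma toWord_tp {g : FG ℓ} (hg : g ∈ Wa a) (T : ℕ) :
    (g * FreeGroup.of a ^ T).toWord = g.toWord ++ List.replicate T (a, true) := by
  rw [of_eq_mk]
  refine toWord_mul_mk_pow g a true ?_ T
  intro e he heq
  rcases mem_Wa_iff.1 hg with rfl | hl
  · simp at he
  · rw [hl] at he
    have : (a, true) = e := by simpa using he
    rw [← this] at heq
    simp at heq

lemma wl_tp {g : FG ℓ} (hg : g ∈ Wa a) (T : ℕ) : wl (g * FreeGroup.of a ^ T) = wl g + T := by
  rw [wl_eq, toWord_tp hg, List.length_append, List.length_replicate, ← wl_eq]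

lemma tp_mem_Wa {g : FG ℓ} (hg : g ∈ Wa a) {T : ℕ} (hT : 1 ≤ T) :
    g * FreeGroup.of a ^ T ∈ Wa a := by
  rw [mem_Wa_iff]
  right
  obtain ⟨T', rfl⟩ : ∃ T', T = T' + 1 := ⟨T - 1, by omega⟩
  rw [toWord_tp hg, getLast?_append_replicate_succ]

lemma toWord_tm {g : FG ℓ} (hg : g ∉ Wa a) (T : ℕ) :
    (g * (FreeGroup.of a ^ T)⁻¹).toWord = g.toWord ++ List.replicate T (a, false) := by
  rw [← inv_pow, of_inv_eq_mk]
  refine toWord_mul_mk_pow g a false ?_ T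
  intro e he heq
  apply hg
  rw [mem_Wa_iff]
  right
  rw [he, heq]; rfl

lemma wl_tm {g : FG ℓ} (hg : g ∉ Wa a) (T : ℕ) : wl (g * (FreeGroup.of a ^ T)⁻¹) = wl g + T := by
  rw [wl_eq, toWord_tm hg, List.length_append, List.length_replicate, ← wl_eq]

lemma tm_not_mem_Wa {g : FG ℓ} (hg : g ∉ Wa a) {T : ℕ} (hT : 1 ≤ T) :
    g * (FreeGroup.of a ^ T)⁻¹ ∉ Wa a := by
  intro hmem
  obtain ⟨T', rfl⟩ : ∃ T', T = T' + 1 := ⟨T - 1, by omega⟩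
  rcases mem_Wa_iff.1 hmem with h1 | hl
  · have := congrArg FreeGroup.toWord h1
    rw [toWord_tm hg, FreeGroup.toWord_one] at this
    simpa using this
  · rw [toWord_tm hg, getLast?_append_replicate_succ] at hl
    simpa using hl

lemma ball_finite (r : ℕ) : (ball ℓ r).Finite := by
  have h : ball ℓ r ⊆ FreeGroup.toWord ⁻¹' {l : List (Fin ℓ × Bool) | l.length ≤ r} := by
    intro g hg
    exact hg
  exact Set.Finite.subset ((List.finite_length_le _ r).preimage
    (FreeGroup.toWord_injective.injOn)) h




variable {m : ℕ}

/-- cylinder over a finite coordinate set with full pattern -/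
def cylF (T : Finset (FG ℓ)) (σc : Conf ℓ m) : Set (Conf ℓ m) := {x | ∀ g ∈ T, x g = σc g}

lemma cylF_measurable (T : Finset (FG ℓ)) (σc : Conf ℓ m) : MeasurableSet (cylF T σc) := by
  have h : cylF T σc = ⋂ g ∈ T, (fun x : Conf ℓ m => x g) ⁻¹' {σc g} := by
    ext x; simp [cylF]
  rw [h]
  exact Set.Finite.measurableSet_biInter (T.finite_toSet)
    fun g _ => (measurable_pi_apply g) (measurableSet_singleton _)

/-- sets determined by coordinates in T -/
def detOn (T : Finset (FG ℓ)) (D : Set (Conf ℓ m)) : Prop :=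
  ∀ x y : Conf ℓ m, (∀ g ∈ T, x g = y g) → (x ∈ D ↔ y ∈ D)

lemma detOn_cylF (T : Finset (FG ℓ)) (σc : Conf ℓ m) : detOn T (cylF T σc) := by
  intro x y hxy
  constructor <;> intro h g hg
  · rw [← hxy g hg]; exact h g hg
  · rw [hxy g hg]; exact h g hg

lemma detOn_mono {T T' : Finset (FG ℓ)} (h : T ⊆ T') {D : Set (Conf ℓ m)} (hD : detOn T D) :
    detOn T' D := fun x y hxy => hD x y fun g hg => hxy g (h hg)

lemma detOn_inter {T : Finset (FG ℓ)} {D D' : Set (Conf ℓ m)} (hD : detOn T D)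
    (hD' : detOn T D') : detOn T (D ∩ D') := fun x y hxy => by
  rw [Set.mem_inter_iff, Set.mem_inter_iff, hD x y hxy, hD' x y hxy]

lemma detOn_compl {T : Finset (FG ℓ)} {D : Set (Conf ℓ m)} (hD : detOn T D) :
    detOn T Dᶜ := fun x y hxy => by
  rw [Set.mem_compl_iff, Set.mem_compl_iff, hD x y hxy]

lemma detOn_union {T : Finset (FG ℓ)} {D D' : Set (Conf ℓ m)} (hD : detOn T D)
    (hD' : detOn T D') : detOn T (D ∪ D') := fun x y hxy => by
  rw [Set.mem_union, Set.mem_union, hD x y hxy, hD' x y hxy]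

lemma detOn_comp {T : Finset (FG ℓ)} {D : Set (Conf ℓ m)} (hD : detOn T D)
    (σ : FG ℓ → FG ℓ) : detOn (T.image σ) ((fun x : Conf ℓ m => x ∘ σ) ⁻¹' D) := by
  intro x y hxy
  exact hD (x ∘ σ) (y ∘ σ) fun g hg => hxy (σ g) (Finset.mem_image_of_mem σ hg)

section withPoint
variable (i0 : Fin m)

/-- extend a pattern on T to a full configuration -/
def embed (T : Finset (FG ℓ)) (v : {g // g ∈ T} → Fin m) : Conf ℓ m :=
  fun g => if h : g ∈ T then v ⟨g, h⟩ else i0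

lemma embed_eq {T : Finset (FG ℓ)} (v : {g // g ∈ T} → Fin m) {g : FG ℓ} (h : g ∈ T) :
    embed i0 T v g = v ⟨g, h⟩ := dif_pos h

/-- the patterns compatible with a set D -/
noncomputable def pats (T : Finset (FG ℓ)) (D : Set (Conf ℓ m)) :
    Finset ({g // g ∈ T} → Fin m) := by
  classical exact Finset.univ.filter (fun v => embed i0 T v ∈ D)

lemma mem_pats {T : Finset (FG ℓ)} {D : Set (Conf ℓ m)} {v : {g // g ∈ T} → Fin m} :
    v ∈ pats i0 T D ↔ embed i0 T v ∈ D := by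
  classical simp [pats]

lemma detOn_decomp {T : Finset (FG ℓ)} {D : Set (Conf ℓ m)} (hD : detOn T D) :
    D = ⋃ v ∈ pats i0 T D, cylF T (embed i0 T v) := by
  ext x
  simp only [Set.mem_iUnion, mem_pats]
  constructor
  · intro hx
    refine ⟨fun g => x g.1, ?_, ?_⟩
    · exact (hD _ x (fun g hg => embed_eq i0 _ hg)).2 hx
    · intro g hg
      rw [embed_eq i0 _ hg]
  · rintro ⟨v, hv, hcyl⟩
    exact (hD x (embed i0 T v) (fun g hg => hcyl g hg)).2 hv

lemma cylF_embed_disjoint {T : Finset (FG ℓ)} {v w : {g // g ∈ T} → Fin m} (hvw : v ≠ w) :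
    Disjoint (cylF T (embed i0 T v)) (cylF T (embed i0 T w)) := by
  rw [Set.disjoint_left]
  intro x hxv hxw
  apply hvw
  funext g
  have h1 := hxv g.1 g.2
  have h2 := hxw g.1 g.2
  rw [embed_eq i0 _ g.2] at h1
  rw [embed_eq i0 _ g.2] at h2
  rw [← h1, h2]

include i0 in
lemma detOn_measurableSet {T : Finset (FG ℓ)} {D : Set (Conf ℓ m)} (hD : detOn T D) :
    MeasurableSet D := by
  rw [detOn_decomp i0 hD]
  exact (pats i0 T D).measurableSet_biUnion fun v _ => cylF_measurable T _

include i0 in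
lemma measure_detOn (μ : Measure (Conf ℓ m)) {T : Finset (FG ℓ)} {D : Set (Conf ℓ m)}
    (hD : detOn T D) : μ D = ∑ v ∈ pats i0 T D, μ (cylF T (embed i0 T v)) := by
  conv_lhs => rw [detOn_decomp i0 hD]
  exact measure_biUnion_finset
    (fun v _ w _ hvw => cylF_embed_disjoint i0 hvw)
    (fun v _ => cylF_measurable T _)

end withPoint

lemma cylF_toReal {P : Fin m → ℝ} {μ : Measure (Conf ℓ m)} (hμ : IsBernoulli P μ)
    (T : Finset (FG ℓ)) (σc : Conf ℓ m) : (μ (cylF T σc)).toReal = ∏ g ∈ T, P (σc g) :=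
  hμ.2 T σc

lemma cylF_inter_disjoint {T1 T2 : Finset (FG ℓ)} (hT : Disjoint T1 T2) (σ1 σ2 : Conf ℓ m) :
    cylF T1 σ1 ∩ cylF T2 σ2 = cylF (T1 ∪ T2) (fun g => if g ∈ T1 then σ1 g else σ2 g) := by
  ext x
  simp only [cylF, Set.mem_inter_iff, Set.mem_setOf_eq, Finset.mem_union]
  constructor
  · rintro ⟨h1, h2⟩ g hg
    by_cases hgT : g ∈ T1
    · rw [if_pos hgT]; exact h1 g hgT
    · rw [if_neg hgT]; exact h2 g (hg.resolve_left hgT)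
  · intro h
    refine ⟨fun g hg => ?_, fun g hg => ?_⟩
    · have := h g (Or.inl hg); rwa [if_pos hg] at this
    · have := h g (Or.inr hg)
      rwa [if_neg (Finset.disjoint_right.1 hT hg)] at this

lemma cylF_inter_toReal {P : Fin m → ℝ} {μ : Measure (Conf ℓ m)} (hμ : IsBernoulli P μ)
    {T1 T2 : Finset (FG ℓ)} (hT : Disjoint T1 T2) (σ1 σ2 : Conf ℓ m) :
    (μ (cylF T1 σ1 ∩ cylF T2 σ2)).toReal
      = (μ (cylF T1 σ1)).toReal * (μ (cylF T2 σ2)).toReal := by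
  rw [cylF_inter_disjoint hT, cylF_toReal hμ, cylF_toReal hμ, cylF_toReal hμ,
    Finset.prod_union hT]
  congr 1
  · exact Finset.prod_congr rfl fun g hg => by rw [if_pos hg]
  · exact Finset.prod_congr rfl fun g hg => by
      rw [if_neg (Finset.disjoint_right.1 hT hg)]

lemma indep2 (i0 : Fin m) {P : Fin m → ℝ} {μ : Measure (Conf ℓ m)} (hμ : IsBernoulli P μ)
    {T1 T2 : Finset (FG ℓ)} {D1 D2 : Set (Conf ℓ m)} (hT : Disjoint T1 T2)
    (h1 : detOn T1 D1) (h2 : detOn T2 D2) :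
    (μ (D1 ∩ D2)).toReal = (μ D1).toReal * (μ D2).toReal := by
  have hprob : IsProbabilityMeasure μ := hμ.1
  have hmeas2 : MeasurableSet D2 := detOn_measurableSet i0 h2
  have e1 : D1 ∩ D2 = ⋃ v ∈ pats i0 T1 D1, (cylF T1 (embed i0 T1 v) ∩ D2) := by
    conv_lhs => rw [detOn_decomp i0 h1]
    rw [Set.iUnion₂_inter]
  have hsum1 : μ (D1 ∩ D2) = ∑ v ∈ pats i0 T1 D1, μ (cylF T1 (embed i0 T1 v) ∩ D2) := by
    rw [e1]
    exact measure_biUnion_finset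
      (fun v _ w _ hvw => ((cylF_embed_disjoint i0 hvw).mono Set.inter_subset_left
        Set.inter_subset_left))
      (fun v _ => (cylF_measurable T1 _).inter hmeas2)
  have hsum2 : ∀ v, μ (cylF T1 (embed i0 T1 v) ∩ D2)
      = ∑ w ∈ pats i0 T2 D2, μ (cylF T1 (embed i0 T1 v) ∩ cylF T2 (embed i0 T2 w)) := by
    intro v
    have e2 : cylF T1 (embed i0 T1 v) ∩ D2
        = ⋃ w ∈ pats i0 T2 D2, (cylF T1 (embed i0 T1 v) ∩ cylF T2 (embed i0 T2 w)) := by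
      conv_lhs => rw [detOn_decomp i0 h2]
      rw [Set.inter_iUnion₂]
    rw [e2]
    exact measure_biUnion_finset
      (fun v' _ w' _ hvw => ((cylF_embed_disjoint i0 hvw).mono Set.inter_subset_right
        Set.inter_subset_right))
      (fun w _ => (cylF_measurable T1 _).inter (cylF_measurable T2 _))
  have hne : ∀ (S : Set (Conf ℓ m)), μ S ≠ ⊤ := fun S => measure_ne_top μ S
  calc (μ (D1 ∩ D2)).toReal
      = ∑ v ∈ pats i0 T1 D1, (μ (cylF T1 (embed i0 T1 v) ∩ D2)).toReal := by
        rw [hsum1, ENNReal.toReal_sum (fun _ _ => hne _)]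
    _ = ∑ v ∈ pats i0 T1 D1, ∑ w ∈ pats i0 T2 D2,
          (μ (cylF T1 (embed i0 T1 v))).toReal * (μ (cylF T2 (embed i0 T2 w))).toReal := by
        refine Finset.sum_congr rfl fun v _ => ?_
        rw [hsum2 v, ENNReal.toReal_sum (fun _ _ => hne _)]
        exact Finset.sum_congr rfl fun w _ => cylF_inter_toReal hμ hT _ _
    _ = (∑ v ∈ pats i0 T1 D1, (μ (cylF T1 (embed i0 T1 v))).toReal)
          * (∑ w ∈ pats i0 T2 D2, (μ (cylF T2 (embed i0 T2 w))).toReal) := by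
        rw [Finset.sum_mul_sum]
    _ = (μ D1).toReal * (μ D2).toReal := by
        rw [← ENNReal.toReal_sum (fun _ _ => hne _), ← ENNReal.toReal_sum (fun _ _ => hne _),
          ← measure_detOn i0 μ h1, ← measure_detOn i0 μ h2]

lemma indep3 (i0 : Fin m) {P : Fin m → ℝ} {μ : Measure (Conf ℓ m)} (hμ : IsBernoulli P μ)
    {T0 T1 T2 : Finset (FG ℓ)} {D0 D1 D2 : Set (Conf ℓ m)}
    (h01 : Disjoint T0 T1) (h02 : Disjoint T0 T2) (h12 : Disjoint T1 T2)
    (h0 : detOn T0 D0) (h1 : detOn T1 D1) (h2 : detOn T2 D2) :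
    (μ (D0 ∩ D1 ∩ D2)).toReal = (μ D0).toReal * (μ D1).toReal * (μ D2).toReal := by
  rw [Set.inter_assoc]
  rw [indep2 i0 hμ (Finset.disjoint_union_right.2 ⟨h01, h02⟩) h0
    (detOn_inter (detOn_mono Finset.subset_union_left h1)
      (detOn_mono Finset.subset_union_right h2))]
  rw [indep2 i0 hμ h12 h1 h2, mul_assoc]


open scoped symmDiff

lemma pi_eq_generateFrom_cylF :
    (MeasurableSpace.pi : MeasurableSpace (Conf ℓ m))
      = MeasurableSpace.generateFrom {S : Set (Conf ℓ m) | ∃ T σc, S = cylF T σc} := by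
  apply le_antisymm
  · have hpi : (MeasurableSpace.pi : MeasurableSpace (Conf ℓ m))
        = ⨆ g : FG ℓ, MeasurableSpace.comap (fun x : Conf ℓ m => x g) inferInstance := rfl
    rw [hpi]
    refine iSup_le fun g => ?_
    rintro s ⟨t, -, rfl⟩
    rw [show (fun x : Conf ℓ m => x g) ⁻¹' t
        = ⋃ i ∈ t, (fun x : Conf ℓ m => x g) ⁻¹' {i} by ext x; simp]
    refine MeasurableSet.biUnion t.to_countable fun i _ => ?_
    apply MeasurableSpace.measurableSet_generateFrom
    refine ⟨{g}, fun _ => i, ?_⟩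
    ext x; simp [cylF]
  · apply MeasurableSpace.generateFrom_le
    rintro S ⟨T, σc, rfl⟩
    exact cylF_measurable T σc

lemma isPiSystem_cylF :
    IsPiSystem {S : Set (Conf ℓ m) | ∃ T σc, S = cylF T σc} := by
  rintro _ ⟨T1, σ1, rfl⟩ _ ⟨T2, σ2, rfl⟩ hne
  obtain ⟨x0, hx1, hx2⟩ := hne
  refine ⟨T1 ∪ T2, fun g => if g ∈ T1 then σ1 g else σ2 g, ?_⟩
  ext x
  simp only [cylF, Set.mem_inter_iff, Set.mem_setOf_eq, Finset.mem_union]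
  constructor
  · rintro ⟨h1, h2⟩ g hg
    by_cases hgT : g ∈ T1
    · rw [if_pos hgT]; exact h1 g hgT
    · rw [if_neg hgT]; exact h2 g (hg.resolve_left hgT)
  · intro h
    refine ⟨fun g hg => by have := h g (Or.inl hg); rwa [if_pos hg] at this,
      fun g hg => ?_⟩
    by_cases hgT : g ∈ T1
    · have := h g (Or.inl hgT)
      rw [if_pos hgT] at this
      rw [this]
      exact (hx1 g hgT).symm.trans (hx2 g hg)
    · have := h g (Or.inr hg)
      rwa [if_neg hgT] at this

lemma measurable_comp_map (σ : FG ℓ → FG ℓ) : Measurable (fun x : Conf ℓ m => x ∘ σ) :=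
  measurable_pi_lambda _ fun g => measurable_pi_apply (σ g)

lemma measurePreserving_comp_perm {P : Fin m → ℝ} {μ : Measure (Conf ℓ m)}
    (hμ : IsBernoulli P μ) (e : Equiv.Perm (FG ℓ)) :
    MeasurePreserving (fun x : Conf ℓ m => x ∘ ⇑e) μ μ := by
  have hprob : IsProbabilityMeasure μ := hμ.1
  have hmeas : Measurable (fun x : Conf ℓ m => x ∘ ⇑e) := measurable_comp_map ⇑e
  refine ⟨hmeas, ?_⟩
  have hprob2 : IsProbabilityMeasure (Measure.map (fun x : Conf ℓ m => x ∘ ⇑e) μ) :=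
    Measure.isProbabilityMeasure_map hmeas.aemeasurable
  refine ext_of_generate_finite _ pi_eq_generateFrom_cylF isPiSystem_cylF ?_ ?_
  · rintro _ ⟨T, σc, rfl⟩
    rw [Measure.map_apply hmeas (cylF_measurable T σc)]
    have hpre : (fun x : Conf ℓ m => x ∘ ⇑e) ⁻¹' cylF T σc
        = cylF (T.image ⇑e) (σc ∘ ⇑e.symm) := by
      ext x
      simp only [cylF, Set.mem_preimage, Set.mem_setOf_eq, Finset.mem_image,
        Function.comp_apply]
      constructor
      · rintro h g' ⟨g, hg, rfl⟩
        rw [Equiv.symm_apply_apply]; exact h g hg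
      · intro h g hg
        have := h (e g) ⟨g, hg, rfl⟩
        rwa [Equiv.symm_apply_apply] at this
    rw [hpre]
    apply (ENNReal.toReal_eq_toReal_iff' (measure_ne_top _ _) (measure_ne_top _ _)).1
    rw [cylF_toReal hμ, cylF_toReal hμ,
      Finset.prod_image (fun g _ g' _ h => e.injective h)]
    exact Finset.prod_congr rfl fun g _ => by simp
  · simp

/-- the algebra of finitely-determined sets -/
def detAlg : Set (Set (Conf ℓ m)) := {D | ∃ T : Finset (FG ℓ), detOn T D}

lemma isSetAlgebra_detAlg : IsSetAlgebra (detAlg (ℓ := ℓ) (m := m)) where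
  empty_mem := ⟨∅, fun _ _ _ => Iff.rfl⟩
  compl_mem := fun _ ⟨T, hT⟩ => ⟨T, detOn_compl hT⟩
  union_mem := fun _ _ ⟨T1, h1⟩ ⟨T2, h2⟩ =>
    ⟨T1 ∪ T2, detOn_union (detOn_mono Finset.subset_union_left h1)
      (detOn_mono Finset.subset_union_right h2)⟩

lemma pi_eq_generateFrom_detAlg (i0 : Fin m) :
    (MeasurableSpace.pi : MeasurableSpace (Conf ℓ m))
      = MeasurableSpace.generateFrom (detAlg (ℓ := ℓ) (m := m)) := by
  apply le_antisymm
  · rw [pi_eq_generateFrom_cylF]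
    apply MeasurableSpace.generateFrom_mono
    rintro _ ⟨T, σc, rfl⟩
    exact ⟨T, detOn_cylF T σc⟩
  · apply MeasurableSpace.generateFrom_le
    rintro D ⟨T, hT⟩
    exact detOn_measurableSet i0 hT

lemma approx_detOn (i0 : Fin m) {P : Fin m → ℝ} {μ : Measure (Conf ℓ m)}
    (hμ : IsBernoulli P μ) {A : Set (Conf ℓ m)} (hA : MeasurableSet A) {δ : ℝ} (hδ : 0 < δ) :
    ∃ (T : Finset (FG ℓ)) (D : Set (Conf ℓ m)), detOn T D ∧ (μ (A ∆ D)).toReal < δ := by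
  have hprob : IsProbabilityMeasure μ := hμ.1
  have hdense := Measure.MeasureDense.of_generateFrom_isSetAlgebra_finite (μ := μ)
    isSetAlgebra_detAlg (pi_eq_generateFrom_detAlg i0)
  obtain ⟨D, ⟨T, hT⟩, hlt⟩ := hdense.approx A hA (measure_ne_top μ A) δ hδ
  exact ⟨T, D, hT, (ENNReal.lt_ofReal_iff_toReal_lt (measure_ne_top μ _)).1 hlt⟩

lemma abs_toReal_sub_le {μ : Measure (Conf ℓ m)} [IsFiniteMeasure μ] (S S' : Set (Conf ℓ m)) :
    |(μ S).toReal - (μ S').toReal| ≤ (μ (S ∆ S')).toReal := by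
  have key : ∀ U V : Set (Conf ℓ m), μ U ≤ μ V + μ (U ∆ V) := by
    intro U V
    refine le_trans (measure_mono ?_) (measure_union_le _ _)
    intro x hx
    by_cases h : x ∈ V
    · exact Or.inl h
    · exact Or.inr (Set.mem_symmDiff.2 (Or.inl ⟨hx, h⟩))
  have f1 : (μ S).toReal ≤ (μ S').toReal + (μ (S ∆ S')).toReal := by
    rw [← ENNReal.toReal_add (measure_ne_top _ _) (measure_ne_top _ _)]
    exact ENNReal.toReal_mono (ENNReal.add_ne_top.2 ⟨measure_ne_top _ _, measure_ne_top _ _⟩)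
      (key S S')
  have f2 : (μ S').toReal ≤ (μ S).toReal + (μ (S ∆ S')).toReal := by
    rw [← ENNReal.toReal_add (measure_ne_top _ _) (measure_ne_top _ _)]
    refine ENNReal.toReal_mono
      (ENNReal.add_ne_top.2 ⟨measure_ne_top _ _, measure_ne_top _ _⟩) ?_
    rw [symmDiff_comm]
    exact key S' S
  rw [abs_sub_le_iff]
  constructor <;> linarith



section sig
variable (a)
variable (N R : ℕ)

def Kp : Set (FG ℓ) := {g | g ∈ Wa a ∧ N < wl g ∧ wl g ≤ R}
def Km : Set (FG ℓ) := {g | g ∉ Wa a ∧ N < wl g ∧ wl g ≤ R}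

noncomputable def tp (g : FG ℓ) : FG ℓ := g * FreeGroup.of a ^ (R + 1)
noncomputable def tm (g : FG ℓ) : FG ℓ := g * (FreeGroup.of a ^ (R + 1))⁻¹

open scoped Classical in
noncomputable def sigp (g : FG ℓ) : FG ℓ :=
  if g ∈ Kp a N R then tp a R g else if tm a R g ∈ Kp a N R then tm a R g else g

open scoped Classical in
noncomputable def sigm (g : FG ℓ) : FG ℓ :=
  if g ∈ Km a N R then tm a R g else if tp a R g ∈ Km a N R then tp a R g else g

variable {a N R}

lemma tp_tm (g : FG ℓ) : tm a R (tp a R g) = g := by unfold tp tm; group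
lemma tm_tp (g : FG ℓ) : tp a R (tm a R g) = g := by unfold tp tm; group

lemma wl_tp' {g : FG ℓ} (hg : g ∈ Wa a) : wl (tp a R g) = wl g + (R + 1) := wl_tp hg _
lemma wl_tm' {g : FG ℓ} (hg : g ∉ Wa a) : wl (tm a R g) = wl g + (R + 1) := wl_tm hg _
lemma tp_mem_Wa' {g : FG ℓ} (hg : g ∈ Wa a) : tp a R g ∈ Wa a := tp_mem_Wa hg (by omega)
lemma tm_not_mem_Wa' {g : FG ℓ} (hg : g ∉ Wa a) : tm a R g ∉ Wa a := tm_not_mem_Wa hg (by omega)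

lemma sigp_invol : Function.Involutive (sigp a N R) := by
  intro g
  unfold sigp
  by_cases h1 : g ∈ Kp a N R
  · rw [if_pos h1]
    have hwl : wl (tp a R g) = wl g + (R + 1) := wl_tp' h1.1
    have hA : tp a R g ∉ Kp a N R := fun hc => by have := hc.2.2; have := h1.2.1; omega
    have hB : tm a R (tp a R g) ∈ Kp a N R := by rw [tp_tm]; exact h1
    rw [if_neg hA, if_pos hB, tp_tm]
  · rw [if_neg h1]
    by_cases h2 : tm a R g ∈ Kp a N R
    · rw [if_pos h2, if_pos h2, tm_tp]
    · rw [if_neg h2, if_neg h1, if_neg h2]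

lemma sigm_invol : Function.Involutive (sigm a N R) := by
  intro g
  unfold sigm
  by_cases h1 : g ∈ Km a N R
  · rw [if_pos h1]
    have hwl : wl (tm a R g) = wl g + (R + 1) := wl_tm' h1.1
    have hA : tm a R g ∉ Km a N R := fun hc => by have := hc.2.2; have := h1.2.1; omega
    have hB : tp a R (tm a R g) ∈ Km a N R := by rw [tm_tp]; exact h1
    rw [if_neg hA, if_pos hB, tm_tp]
  · rw [if_neg h1]
    by_cases h2 : tp a R g ∈ Km a N R
    · rw [if_pos h2, if_pos h2, tp_tm]
    · rw [if_neg h2, if_neg h1, if_neg h2]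

lemma sigp_support (hNR : N ≤ R) {g : FG ℓ} (h : sigp a N R g ≠ g) : g ∈ Wa a ∧ N < wl g := by
  unfold sigp at h
  by_cases h1 : g ∈ Kp a N R
  · exact ⟨h1.1, h1.2.1⟩
  · rw [if_neg h1] at h
    by_cases h2 : tm a R g ∈ Kp a N R
    · have hg : g = tp a R (tm a R g) := (tm_tp g).symm
      constructor
      · rw [hg]; exact tp_mem_Wa' h2.1
      · have : wl (tp a R (tm a R g)) = wl (tm a R g) + (R + 1) := wl_tp' h2.1
        rw [hg, this]; omega
    · rw [if_neg h2] at h; exact absurd rfl h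

lemma sigm_support (hNR : N ≤ R) {g : FG ℓ} (h : sigm a N R g ≠ g) : g ∉ Wa a ∧ N < wl g := by
  unfold sigm at h
  by_cases h1 : g ∈ Km a N R
  · exact ⟨h1.1, h1.2.1⟩
  · rw [if_neg h1] at h
    by_cases h2 : tp a R g ∈ Km a N R
    · have hg : g = tm a R (tp a R g) := (tp_tm g).symm
      constructor
      · rw [hg]; exact tm_not_mem_Wa' h2.1
      · have : wl (tm a R (tp a R g)) = wl (tp a R g) + (R + 1) := wl_tm' h2.1
        rw [hg, this]; omega
    · rw [if_neg h2] at h; exact absurd rfl h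

lemma sigp_range_Wa {g : FG ℓ} (h : sigp a N R g ≠ g) : sigp a N R g ∈ Wa a := by
  unfold sigp at *
  by_cases h1 : g ∈ Kp a N R
  · rw [if_pos h1]; exact tp_mem_Wa' h1.1
  · rw [if_neg h1] at h ⊢
    by_cases h2 : tm a R g ∈ Kp a N R
    · rw [if_pos h2]; exact h2.1
    · rw [if_neg h2] at h; exact absurd rfl h

lemma sigm_range_not_Wa {g : FG ℓ} (h : sigm a N R g ≠ g) : sigm a N R g ∉ Wa a := by
  unfold sigm at *
  by_cases h1 : g ∈ Km a N R
  · rw [if_pos h1]; exact tm_not_mem_Wa' h1.1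
  · rw [if_neg h1] at h ⊢
    by_cases h2 : tp a R g ∈ Km a N R
    · rw [if_pos h2]; exact h2.1
    · rw [if_neg h2] at h; exact absurd rfl h

lemma sigp_fix_of_not_Wa (hNR : N ≤ R) {g : FG ℓ} (hg : g ∉ Wa a) : sigp a N R g = g := by
  by_contra h
  exact hg (sigp_support hNR h).1

lemma sigm_fix_of_Wa (hNR : N ≤ R) {g : FG ℓ} (hg : g ∈ Wa a) : sigm a N R g = g := by
  by_contra h
  exact (sigm_support hNR h).1 hg

lemma sig_invol (hNR : N ≤ R) : Function.Involutive (fun g => sigm a N R (sigp a N R g)) := by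
  intro g
  dsimp only
  by_cases hp : sigp a N R g = g
  · rw [hp]
    by_cases hm : sigm a N R g = g
    · rw [hm, hp, hm]
    · have h1 : sigm a N R g ∉ Wa a := sigm_range_not_Wa hm
      rw [sigp_fix_of_not_Wa hNR h1, sigm_invol g]
  · have h1 : sigp a N R g ∈ Wa a := sigp_range_Wa hp
    have h2 : g ∈ Wa a := (sigp_support hNR hp).1
    rw [sigm_fix_of_Wa hNR h1, sigp_invol g, sigm_fix_of_Wa hNR h2]

lemma wl_sig_gt (hNR : N ≤ R) {g : FG ℓ} (hg1 : N < wl g) (hg2 : wl g ≤ R) :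
    R < wl (sigm a N R (sigp a N R g)) := by
  by_cases hW : g ∈ Wa a
  · have hKp : g ∈ Kp a N R := ⟨hW, hg1, hg2⟩
    have h1 : sigp a N R g = tp a R g := by unfold sigp; rw [if_pos hKp]
    have h2 : tp a R g ∈ Wa a := tp_mem_Wa' hW
    rw [h1, sigm_fix_of_Wa hNR h2, wl_tp' hW]
    omega
  · have hKm : g ∈ Km a N R := ⟨hW, hg1, hg2⟩
    have h1 : sigp a N R g = g := sigp_fix_of_not_Wa hNR hW
    have h2 : sigm a N R g = tm a R g := by unfold sigm; rw [if_pos hKm]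
    rw [h1, h2, wl_tm' hW]
    omega

lemma sigp_fix_small (hNR : N ≤ R) {g : FG ℓ} (hg : wl g ≤ N) : sigp a N R g = g := by
  by_contra h
  have := (sigp_support hNR h).2
  omega

lemma sigm_fix_small (hNR : N ≤ R) {g : FG ℓ} (hg : wl g ≤ N) : sigm a N R g = g := by
  by_contra h
  have := (sigm_support hNR h).2
  omega

lemma sigp_support_finite : {g : FG ℓ | sigp a N R g ≠ g}.Finite := by
  have hsub : {g : FG ℓ | sigp a N R g ≠ g}
      ⊆ Kp a N R ∪ (tp a R '' Kp a N R) := by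
    intro g hg
    simp only [Set.mem_setOf_eq] at hg
    unfold sigp at hg
    by_cases h1 : g ∈ Kp a N R
    · exact Or.inl h1
    · rw [if_neg h1] at hg
      by_cases h2 : tm a R g ∈ Kp a N R
      · exact Or.inr ⟨tm a R g, h2, tm_tp g⟩
      · rw [if_neg h2] at hg; exact absurd rfl hg
  have hKp : (Kp a N R).Finite :=
    (ball_finite R).subset fun g hgk => hgk.2.2
  exact ((hKp.union (hKp.image _)).subset hsub)

lemma sigm_support_finite : {g : FG ℓ | sigm a N R g ≠ g}.Finite := by
  have hsub : {g : FG ℓ | sigm a N R g ≠ g}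
      ⊆ Km a N R ∪ (tm a R '' Km a N R) := by
    intro g hg
    simp only [Set.mem_setOf_eq] at hg
    unfold sigm at hg
    by_cases h1 : g ∈ Km a N R
    · exact Or.inl h1
    · rw [if_neg h1] at hg
      by_cases h2 : tp a R g ∈ Km a N R
      · exact Or.inr ⟨tp a R g, h2, tp_tm g⟩
      · rw [if_neg h2] at hg; exact absurd rfl hg
  have hKm : (Km a N R).Finite :=
    (ball_finite R).subset fun g hgk => hgk.2.2
  exact ((hKm.union (hKm.image _)).subset hsub)

end sig


end Aux

open scoped symmDiff

set_option maxHeartbeats 2000000 in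
theorem HC_weaklyMixing
    {ℓ m : ℕ} (hℓ : 1 ≤ ℓ) (a : Fin ℓ) (P : Fin m → ℝ)
    (hP : ∀ i, 0 < P i) (hPsum : ∑ i, P i = 1)
    (μp : Measure (Conf ℓ m)) (hμp : IsBernoulli P μp)
    (N : ℕ) (η : FG ℓ → Fin m) :
    ∀ ε > (0 : ℝ), ∀ Ω : Finset (Set (Conf ℓ m)),
      (∀ A ∈ Ω, MeasurableSet A ∧ A ⊆ cylOn (ball ℓ N) η) →
      ∃ hplus ∈ HCplus μp a N, ∃ hminus ∈ HCminus μp a N, ∀ A ∈ Ω, ∀ B ∈ Ω,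
        |relMeas μp (cylOn (ball ℓ N) η) ((⇑(hplus * hminus)) '' A ∩ B) -
          relMeas μp (cylOn (ball ℓ N) η) A * relMeas μp (cylOn (ball ℓ N) η) B| < ε := by
  intro ε hε Ω hΩ
  classical
  haveI hprob : IsProbabilityMeasure μp := hμp.1
  -- m is nonzero
  have hm : m ≠ 0 := by
    rintro rfl
    revert hPsum
    simp
  obtain ⟨i0⟩ : Nonempty (Fin m) := ⟨⟨0, Nat.pos_of_ne_zero hm⟩⟩
  -- the base cylinder
  set Cs : Set (Conf ℓ m) := cylOn (ball ℓ N) η with hCs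
  set BN : Finset (FG ℓ) := (ball_finite (ℓ := ℓ) N).toFinset with hBN
  have hmemBN : ∀ g : FG ℓ, g ∈ BN ↔ wl g ≤ N := by
    intro g
    rw [hBN, Set.Finite.mem_toFinset]
    rfl
  have hCcyl : Cs = cylF BN η := by
    ext x
    constructor
    · intro hx g hg
      exact hx g ((hmemBN g).1 hg)
    · intro hx g hg
      exact hx g ((hmemBN g).2 hg)
  have hdetC : detOn BN Cs := hCcyl ▸ detOn_cylF BN η
  have hCmeas : MeasurableSet Cs := hCcyl ▸ cylF_measurable BN η
  set c : ℝ := (μp Cs).toReal with hcdef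
  have hc : 0 < c := by
    rw [hcdef, hCcyl, cylF_toReal hμp]
    exact Finset.prod_pos fun g _ => hP (η g)
  -- approximation
  set δ : ℝ := ε * c / 5 with hδdef
  have hδ : 0 < δ := by positivity
  have happrox : ∀ A ∈ Ω, ∃ (T : Finset (FG ℓ)) (D : Set (Conf ℓ m)),
      detOn T D ∧ (μp (A ∆ D)).toReal < δ :=
    fun A hA => approx_detOn i0 hμp (hΩ A hA).1 hδ
  choose! T0 D0 hdet0 happ using happrox
  -- choose R
  set Tall : Finset (FG ℓ) := BN ∪ Ω.sup T0 with hTall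
  set R : ℕ := max N (Tall.sup wl) with hRdef
  have hNR : N ≤ R := le_max_left _ _
  have hwlR : ∀ g ∈ Tall, wl g ≤ R := fun g hg =>
    le_trans (Finset.le_sup hg) (le_max_right _ _)
  have hT0sub : ∀ A ∈ Ω, T0 A ⊆ Tall := by
    intro A hA g hg
    have h1 : T0 A ≤ Ω.sup T0 := Finset.le_sup hA
    exact Finset.mem_union_right _ (h1 hg)
  -- the permutations
  have hsinv : Function.Involutive (fun g => sigm a N R (sigp a N R g)) := sig_invol hNR
  have hinvP : Function.Involutive (fun x : Conf ℓ m => x ∘ sigp a N R) :=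
    fun x => funext fun g => congrArg x (sigp_invol g)
  have hinvM : Function.Involutive (fun x : Conf ℓ m => x ∘ sigm a N R) :=
    fun x => funext fun g => congrArg x (sigm_invol g)
  set hplus : Equiv.Perm (Conf ℓ m) := Function.Involutive.toPerm _ hinvP with hhp
  set hminus : Equiv.Perm (Conf ℓ m) := Function.Involutive.toPerm _ hinvM with hhm
  have hplus_coe : ⇑hplus = fun x : Conf ℓ m => x ∘ sigp a N R := rfl
  have hminus_coe : ⇑hminus = fun x : Conf ℓ m => x ∘ sigm a N R := rfl
  have hplus_symm_coe : ⇑hplus.symm = fun x : Conf ℓ m => x ∘ sigp a N R := rfl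
  have hminus_symm_coe : ⇑hminus.symm = fun x : Conf ℓ m => x ∘ sigm a N R := rfl
  have hplus_mp : MeasurePreserving ⇑hplus μp μp :=
    measurePreserving_comp_perm hμp (Function.Involutive.toPerm _ (sigp_invol (a := a) (N := N) (R := R)))
  have hminus_mp : MeasurePreserving ⇑hminus μp μp :=
    measurePreserving_comp_perm hμp (Function.Involutive.toPerm _ (sigm_invol (a := a) (N := N) (R := R)))
  -- membership in HCplus
  have hplus_mem : hplus ∈ HCplus μp a N := by
    refine ⟨⟨measurable_comp_map (sigp a N R), measurable_comp_map (sigp a N R), hplus_mp, ?_⟩, ?_⟩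
    · refine Filter.Eventually.of_forall fun x => ?_
      refine (sigp_support_finite (a := a) (N := N) (R := R)).subset ?_
      intro g hg
      simp only [Set.mem_setOf_eq] at hg ⊢
      intro hfix
      exact hg (by rw [hplus_coe]; simp only [Function.comp_apply]; rw [hfix])
    · refine Filter.Eventually.of_forall fun x => ?_
      intro g hg
      rw [hplus_coe]
      simp only [Function.comp_apply]
      rcases hg with hg | hg
      · rw [sigp_fix_small hNR hg]
      · rw [sigp_fix_of_not_Wa hNR hg]
  have hminus_mem : hminus ∈ HCminus μp a N := by
    refine ⟨⟨measurable_comp_map (sigm a N R), measurable_comp_map (sigm a N R), hminus_mp, ?_⟩, ?_⟩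
    · refine Filter.Eventually.of_forall fun x => ?_
      refine (sigm_support_finite (a := a) (N := N) (R := R)).subset ?_
      intro g hg
      simp only [Set.mem_setOf_eq] at hg ⊢
      intro hfix
      exact hg (by rw [hminus_coe]; simp only [Function.comp_apply]; rw [hfix])
    · refine Filter.Eventually.of_forall fun x => ?_
      intro g hg
      rw [hminus_coe]
      simp only [Function.comp_apply]
      rcases hg with hg | hg
      · rw [sigm_fix_of_Wa hNR hg]
      · rw [sigm_fix_small hNR hg]
  refine ⟨hplus, hplus_mem, hminus, hminus_mem, ?_⟩
  -- the composite map
  have hHcoe : ⇑(hplus * hminus) = (fun x : Conf ℓ m => x ∘ (fun g => sigm a N R (sigp a N R g))) := rfl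
  have hHinv : Function.Involutive ⇑(hplus * hminus) := by
    rw [hHcoe]
    intro x
    exact funext fun g => congrArg x (hsinv g)
  have hHmp : MeasurePreserving ⇑(hplus * hminus) μp μp := by
    rw [hHcoe]
    exact measurePreserving_comp_perm hμp (Function.Involutive.toPerm _ hsinv)
  have hHmeas : Measurable ⇑(hplus * hminus) := hHmp.measurable
  have hHimg : ∀ X : Set (Conf ℓ m), ⇑(hplus * hminus) '' X = ⇑(hplus * hminus) ⁻¹' X := by
    intro X
    ext y
    constructor
    · rintro ⟨x, hx, rfl⟩
      show ⇑(hplus * hminus) (⇑(hplus * hminus) x) ∈ X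
      rw [hHinv x]
      exact hx
    · intro hy
      exact ⟨(hplus * hminus) y, hy, hHinv y⟩
  have hfixN : ∀ g : FG ℓ, g ∈ ball ℓ N → sigm a N R (sigp a N R g) = g := by
    intro g hg
    have hgN : wl g ≤ N := hg
    rw [sigp_fix_small hNR hgN, sigm_fix_small hNR hgN]
  have hCpre : ⇑(hplus * hminus) ⁻¹' Cs = Cs := by
    rw [hHcoe]
    ext x
    simp only [Set.mem_preimage, hCs, cylOn, Set.mem_setOf_eq, Function.comp_apply]
    constructor
    · intro hx g hg
      have h2 := hx g hg
      rwa [hfixN g hg] at h2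
    · intro hx g hg
      rw [hfixN g hg]
      exact hx g hg
  -- patched determined approximants
  have hpatch_eq : ∀ x ∈ Cs, (fun g => if g ∈ BN then η g else x g) = x := by
    intro x hx
    funext g
    by_cases hg : g ∈ BN
    · rw [if_pos hg]; exact (hx g ((hmemBN g).1 hg)).symm
    · rw [if_neg hg]
  set Dp : Set (Conf ℓ m) → Set (Conf ℓ m) :=
    fun A => {x | (fun g => if g ∈ BN then η g else x g) ∈ D0 A} with hDp
  have hCDp : ∀ A, Cs ∩ Dp A = Cs ∩ D0 A := by
    intro A
    ext x
    simp only [Set.mem_inter_iff, hDp, Set.mem_setOf_eq]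
    constructor
    · rintro ⟨h1, h2⟩; exact ⟨h1, by rwa [hpatch_eq x h1] at h2⟩
    · rintro ⟨h1, h2⟩; exact ⟨h1, by rwa [hpatch_eq x h1]⟩
  have hdetDp : ∀ A ∈ Ω, detOn (T0 A \ BN) (Dp A) := by
    intro A hA x y hxy
    have hagree : ∀ g ∈ T0 A, (if g ∈ BN then η g else x g) = (if g ∈ BN then η g else y g) := by
      intro g hg
      by_cases hgB : g ∈ BN
      · rw [if_pos hgB, if_pos hgB]
      · rw [if_neg hgB, if_neg hgB]
        exact hxy g (Finset.mem_sdiff.2 ⟨hg, hgB⟩)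
    exact hdet0 A hA _ _ hagree
  have hE : ∀ A ∈ Ω, ∀ g ∈ T0 A \ BN, N < wl g ∧ wl g ≤ R := by
    intro A hA g hg
    rcases Finset.mem_sdiff.1 hg with ⟨hg1, hg2⟩
    refine ⟨?_, hwlR g (hT0sub A hA hg1)⟩
    by_contra h
    exact hg2 ((hmemBN g).2 (by omega))
  have happ2 : ∀ A ∈ Ω, (μp (A ∆ (Cs ∩ Dp A))).toReal < δ := by
    intro A hA
    have hAC : A ⊆ Cs := (hΩ A hA).2
    refine lt_of_le_of_lt ?_ (happ A hA)
    rw [hCDp A]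
    refine ENNReal.toReal_mono (measure_ne_top _ _) (measure_mono ?_)
    intro x hx
    rcases Set.mem_symmDiff.1 hx with ⟨h1, h2⟩ | ⟨h1, h2⟩
    · exact Set.mem_symmDiff.2 (Or.inl ⟨h1, fun hD => h2 ⟨hAC h1, hD⟩⟩)
    · exact Set.mem_symmDiff.2 (Or.inr ⟨h1.2, h2⟩)
  have hDpmeas : ∀ A ∈ Ω, MeasurableSet (Dp A) := fun A hA =>
    detOn_measurableSet i0 (hdetDp A hA)
  have himg_far : ∀ A ∈ Ω, ∀ g' ∈ (T0 A \ BN).image (fun g => sigm a N R (sigp a N R g)),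
      R < wl g' := by
    intro A hA g' hg'
    rcases Finset.mem_image.1 hg' with ⟨g, hg, rfl⟩
    rcases hE A hA g hg with ⟨h1, h2⟩
    exact wl_sig_gt hNR h1 h2
  have hdisjBN_img : ∀ A ∈ Ω,
      Disjoint BN ((T0 A \ BN).image (fun g => sigm a N R (sigp a N R g))) := by
    intro A hA
    rw [Finset.disjoint_left]
    intro g hg hg'
    have h1 := himg_far A hA g hg'
    have h2 := (hmemBN g).1 hg
    omega
  have hdisjBN_E : ∀ A : Set (Conf ℓ m), Disjoint BN (T0 A \ BN) :=
    fun A => Finset.disjoint_sdiff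
  have hdisj_img_E : ∀ A ∈ Ω, ∀ B ∈ Ω,
      Disjoint ((T0 A \ BN).image (fun g => sigm a N R (sigp a N R g))) (T0 B \ BN) := by
    intro A hA B hB
    rw [Finset.disjoint_left]
    intro g hg hg'
    have h1 := himg_far A hA g hg
    have h2 := (hE B hB g hg').2
    omega
  have hpreDp : ∀ A ∈ Ω, detOn ((T0 A \ BN).image (fun g => sigm a N R (sigp a N R g)))
      (⇑(hplus * hminus) ⁻¹' Dp A) := by
    intro A hA
    rw [hHcoe]
    exact detOn_comp (hdetDp A hA) _
  intro A hA B hB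
  obtain ⟨hAmeas, hAC⟩ := hΩ A hA
  obtain ⟨hBmeas, hBC⟩ := hΩ B hB
  have hA2meas : MeasurableSet (Cs ∩ Dp A) := hCmeas.inter (hDpmeas A hA)
  have hB2meas : MeasurableSet (Cs ∩ Dp B) := hCmeas.inter (hDpmeas B hB)
  have hinter : ⇑(hplus * hminus) ⁻¹' (Cs ∩ Dp A) ∩ (Cs ∩ Dp B)
      = Cs ∩ (⇑(hplus * hminus) ⁻¹' Dp A) ∩ Dp B := by
    rw [Set.preimage_inter, hCpre]
    ext x
    simp only [Set.mem_inter_iff]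
    tauto
  have hprod3 : (μp (Cs ∩ (⇑(hplus * hminus) ⁻¹' Dp A) ∩ Dp B)).toReal
      = c * (μp (⇑(hplus * hminus) ⁻¹' Dp A)).toReal * (μp (Dp B)).toReal :=
    indep3 i0 hμp (hdisjBN_img A hA) (hdisjBN_E B) (hdisj_img_E A hA B hB)
      hdetC (hpreDp A hA) (hdetDp B hB)
  have hpre_meas_eq : ∀ X : Set (Conf ℓ m), MeasurableSet X →
      μp (⇑(hplus * hminus) ⁻¹' X) = μp X :=
    fun X hX => hHmp.measure_preimage hX.nullMeasurableSet
  have hprodA : (μp (Cs ∩ Dp A)).toReal = c * (μp (Dp A)).toReal :=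
    indep2 i0 hμp (hdisjBN_E A) hdetC (hdetDp A hA)
  have hprodB : (μp (Cs ∩ Dp B)).toReal = c * (μp (Dp B)).toReal :=
    indep2 i0 hμp (hdisjBN_E B) hdetC (hdetDp B hB)
  -- real abbreviations
  set t1 : ℝ := (μp (⇑(hplus * hminus) ⁻¹' A ∩ B)).toReal with ht1
  set t2 : ℝ := (μp (⇑(hplus * hminus) ⁻¹' (Cs ∩ Dp A) ∩ (Cs ∩ Dp B))).toReal with ht2def
  set tA : ℝ := (μp A).toReal with htA
  set tB : ℝ := (μp B).toReal with htB
  set tA2 : ℝ := (μp (Cs ∩ Dp A)).toReal with htA2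
  set tB2 : ℝ := (μp (Cs ∩ Dp B)).toReal with htB2
  set dA : ℝ := (μp (A ∆ (Cs ∩ Dp A))).toReal with hdA
  set dB : ℝ := (μp (B ∆ (Cs ∩ Dp B))).toReal with hdB
  have hdAδ : dA < δ := happ2 A hA
  have hdBδ : dB < δ := happ2 B hB
  have hdA0 : 0 ≤ dA := ENNReal.toReal_nonneg
  have hdB0 : 0 ≤ dB := ENNReal.toReal_nonneg
  have htA0 : 0 ≤ tA := ENNReal.toReal_nonneg
  have htB20 : 0 ≤ tB2 := ENNReal.toReal_nonneg
  have htAc : tA ≤ c :=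
    ENNReal.toReal_mono (measure_ne_top _ _) (measure_mono hAC)
  have htB2c : tB2 ≤ c :=
    ENNReal.toReal_mono (measure_ne_top _ _) (measure_mono Set.inter_subset_left)
  -- exact product value
  have ht2c : t2 * c = tA2 * tB2 := by
    rw [ht2def, hinter, hprod3, hpre_meas_eq (Dp A) (hDpmeas A hA), hprodA, hprodB]
    ring
  -- approximation of the main term
  have habs1 : |t1 - t2| ≤ dA + dB := by
    have hsub : (⇑(hplus * hminus) ⁻¹' A ∩ B) ∆ (⇑(hplus * hminus) ⁻¹' (Cs ∩ Dp A) ∩ (Cs ∩ Dp B))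
        ⊆ (⇑(hplus * hminus) ⁻¹' (A ∆ (Cs ∩ Dp A))) ∪ (B ∆ (Cs ∩ Dp B)) := by
      rw [Set.preimage_symmDiff]
      intro x hx
      simp only [Set.mem_symmDiff, Set.mem_inter_iff, Set.mem_union, Set.mem_preimage] at *
      tauto
    have hle : μp ((⇑(hplus * hminus) ⁻¹' A ∩ B) ∆
          (⇑(hplus * hminus) ⁻¹' (Cs ∩ Dp A) ∩ (Cs ∩ Dp B)))
        ≤ μp (⇑(hplus * hminus) ⁻¹' (A ∆ (Cs ∩ Dp A))) + μp (B ∆ (Cs ∩ Dp B)) :=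
      (measure_mono hsub).trans (measure_union_le _ _)
    have hprestep : μp (⇑(hplus * hminus) ⁻¹' (A ∆ (Cs ∩ Dp A))) = μp (A ∆ (Cs ∩ Dp A)) :=
      hpre_meas_eq _ (hAmeas.symmDiff hA2meas)
    refine (abs_toReal_sub_le _ _).trans ?_
    calc (μp ((⇑(hplus * hminus) ⁻¹' A ∩ B) ∆
          (⇑(hplus * hminus) ⁻¹' (Cs ∩ Dp A) ∩ (Cs ∩ Dp B)))).toReal
        ≤ ((μp (⇑(hplus * hminus) ⁻¹' (A ∆ (Cs ∩ Dp A)))) + μp (B ∆ (Cs ∩ Dp B))).toReal :=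
          ENNReal.toReal_mono
            (ENNReal.add_ne_top.2 ⟨measure_ne_top _ _, measure_ne_top _ _⟩) hle
      _ = dA + dB := by
          rw [ENNReal.toReal_add (measure_ne_top _ _) (measure_ne_top _ _), hprestep]
  have habs2 : |tA - tA2| ≤ dA := abs_toReal_sub_le _ _
  have habs3 : |tB - tB2| ≤ dB := abs_toReal_sub_le _ _
  -- final numeric estimate
  have key : |t1 * c - tA * tB| < ε * c ^ 2 := by
    have k1 : |t1 * c - t2 * c| ≤ (dA + dB) * c := by
      rw [← sub_mul, abs_mul, abs_of_pos hc]
      exact mul_le_mul_of_nonneg_right habs1 hc.le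
    have k2 : |tA2 * tB2 - tA * tB| ≤ dA * c + c * dB := by
      have hre : tA2 * tB2 - tA * tB = (tA2 - tA) * tB2 + tA * (tB2 - tB) := by ring
      rw [hre]
      refine (abs_add_le _ _).trans ?_
      rw [abs_mul, abs_mul]
      have b1 : |tA2 - tA| ≤ dA := by rw [abs_sub_comm]; exact habs2
      have b2 : |tB2| ≤ c := by rw [abs_of_nonneg htB20]; exact htB2c
      have b3 : |tA| ≤ c := by rw [abs_of_nonneg htA0]; exact htAc
      have b4 : |tB2 - tB| ≤ dB := by rw [abs_sub_comm]; exact habs3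
      exact add_le_add (mul_le_mul b1 b2 (abs_nonneg _) hdA0)
        (mul_le_mul b3 b4 (abs_nonneg _) hc.le)
    have k3 : |t1 * c - tA * tB| ≤ |t1 * c - t2 * c| + |t2 * c - tA * tB| :=
      abs_sub_le _ _ _
    have k4 : |t2 * c - tA * tB| = |tA2 * tB2 - tA * tB| := by rw [ht2c]
    have hδc : δ = ε * c / 5 := hδdef
    nlinarith [mul_lt_mul_of_pos_right hdAδ hc, mul_lt_mul_of_pos_right hdBδ hc,
      mul_pos (mul_pos hε hc) hc]
  -- conclude
  rw [hHimg A]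
  have hrel : ∀ X : Set (Conf ℓ m), relMeas μp Cs X = (μp X).toReal / c := fun X => rfl
  rw [hrel, hrel, hrel, ← ht1, ← htA, ← htB]
  have hne : t1 / c - tA / c * (tB / c) = (t1 * c - tA * tB) / c ^ 2 := by
    field_simp
  rw [hne, abs_div, abs_of_pos (pow_pos hc 2), div_lt_iff₀ (pow_pos hc 2)]
  exact key

end Finitary
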